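/- Let A ∈ M_N(ℂ) and let x, y ∈ ℂ^N be orthonormal vectors. If ⟨Ax, x⟩ belongs to the topological boundary ∂W(A) of the numerical range of A and ⟨Ay, x⟩ = 0, then ⟨Ax, y⟩ = 0. -/

import Mathlib

noncomputable section

open Matrix Polynomial Filter Topology

/-- The numerical range of a matrix `A`: the set `{⟨Ax,x⟩ : ‖x‖ = 1}`, where
`⟨Ax,x⟩` (linear in the first slot) is Mathlib's `⟪x, Ax⟫`. -/
def numRange {N : ℕ} (A : Matrix (Fin N) (Fin N) ℂ) : Set ℂ :=
  {z | ∃ x : EuclideanSpace ℂ (Fin N), ‖x‖ = 1 ∧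
    (inner ℂ x (Matrix.toEuclideanCLM (𝕜 := ℂ) A x) : ℂ) = z}

/-- The Crouzeix ratio `ψ(A)`. -/
def crouzeixRatio {N : ℕ} (A : Matrix (Fin N) (Fin N) ℂ) : ℝ :=
  sSup {r : ℝ | ∃ p : Polynomial ℂ,
    (∀ z ∈ numRange A, ‖Polynomial.eval z p‖ ≤ 1) ∧
    r = ‖Matrix.toEuclideanCLM (𝕜 := ℂ) (Polynomial.aeval A p)‖}

/-- The constant `C_N`. -/
def crouzeixConst (N : ℕ) : ℝ :=
  sSup {r : ℝ | ∃ A : Matrix (Fin N) (Fin N) ℂ, r = crouzeixRatio A}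
set_option maxHeartbeats 2000000 in
/-- if `x, y` are orthonormal, `⟨Ax,x⟩ ∈ ∂W(A)` and `⟨Ay,x⟩ = 0`, then
`⟨Ax,y⟩ = 0`.  (Here `⟨Au,v⟩`, linear in the first slot, is Mathlib's `⟪v, Au⟫`.) -/
theorem stmt10 {N : ℕ} (A : Matrix (Fin N) (Fin N) ℂ)
    (x y : EuclideanSpace ℂ (Fin N)) (hx : ‖x‖ = 1) (hy : ‖y‖ = 1)
    (hxy : (inner ℂ x y : ℂ) = 0)
    (h1 : (inner ℂ x (Matrix.toEuclideanCLM (𝕜 := ℂ) A x) : ℂ) ∈ frontier (numRange A))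
    (h2 : (inner ℂ x (Matrix.toEuclideanCLM (𝕜 := ℂ) A y) : ℂ) = 0) :
    (inner ℂ y (Matrix.toEuclideanCLM (𝕜 := ℂ) A x) : ℂ) = 0 := by
  by_contra hcne
  set T := Matrix.toEuclideanCLM (𝕜 := ℂ) A with hT
  set a : ℂ := inner ℂ x (T x) with ha
  set c : ℂ := inner ℂ y (T x) with hcdef
  set d : ℂ := inner ℂ y (T y) with hd
  have hxx : (inner ℂ x x : ℂ) = 1 := by
    rw [inner_self_eq_norm_sq_to_K, hx]; norm_num
  have hyy : (inner ℂ y y : ℂ) = 1 := by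
    rw [inner_self_eq_norm_sq_to_K, hy]; norm_num
  have hyx : (inner ℂ y x : ℂ) = 0 := by
    rw [← inner_conj_symm, hxy, map_zero]
  -- the basic membership family
  have hmem : ∀ t θ : ℝ,
      a + Complex.exp (-((θ:ℂ) * Complex.I)) * ((Real.sin t : ℂ) * (Real.cos t : ℂ)) * c
        + (Real.sin t : ℂ)^2 * (d - a) ∈ numRange A := by
    intro t θ
    have hsc : ((Real.sin t : ℂ))^2 + ((Real.cos t : ℂ))^2 = 1 := by
      have h := Real.sin_sq_add_cos_sq t
      exact_mod_cast h
    have he : Complex.exp ((θ:ℂ)*Complex.I) * Complex.exp (-((θ:ℂ)*Complex.I)) = 1 := by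
      rw [← Complex.exp_add, add_neg_cancel, Complex.exp_zero]
    set u : EuclideanSpace ℂ (Fin N) :=
      (Real.cos t : ℂ) • x + (Complex.exp ((θ:ℂ) * Complex.I) * (Real.sin t : ℂ)) • y with hu
    have huu : (inner ℂ u u : ℂ) = 1 := by
      simp only [hu, inner_add_left, inner_add_right, inner_smul_left, inner_smul_right,
        hxx, hyy, hxy, hyx, mul_zero, zero_mul, add_zero, zero_add, mul_one,
        _root_.map_mul, Complex.conj_ofReal, ← Complex.exp_conj, Complex.conj_I, mul_neg]
      linear_combination ((Real.sin t:ℂ))^2 * he + hsc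
    have hnu : ‖u‖ = 1 := by
      have h'' : ‖u‖^2 = 1 := by
        rw [@norm_sq_eq_re_inner ℂ, huu]; simp
      nlinarith [norm_nonneg u]
    refine ⟨u, hnu, ?_⟩
    show (inner ℂ u (T u) : ℂ) = _
    simp only [hu, map_add, _root_.map_smul, inner_add_left, inner_add_right,
      inner_smul_left, inner_smul_right, ← ha, ← hcdef, ← hd, h2,
      mul_zero, zero_mul, add_zero, zero_add, mul_one,
      _root_.map_mul, Complex.conj_ofReal, ← Complex.exp_conj, Complex.conj_I, mul_neg]
    linear_combination a * hsc + ((Real.sin t:ℂ))^2 * d * he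
  -- a itself is in the numerical range
  have hamem : a ∈ numRange A := by simpa using hmem 0 0
  -- from c ≠ 0, derive that a is an interior point
  have hcc : 0 < ‖c‖ := by
    simpa [norm_pos_iff] using hcne
  set D := ‖d - a‖ with hD
  have hD0 : 0 ≤ D := norm_nonneg _
  set ε : ℝ := min (1/2) (‖c‖ / (4*(D+1))) with hε
  have hε0 : 0 < ε := lt_min (by norm_num) (by positivity)
  have hε1 : ε ≤ 1/2 := min_le_left _ _
  have hεD : ε * D ≤ ‖c‖ / 4 := by
    have h1 : ε ≤ ‖c‖ / (4*(D+1)) := min_le_right _ _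
    have h2 : ε * D ≤ (‖c‖ / (4*(D+1))) * D :=
      mul_le_mul_of_nonneg_right h1 hD0
    have h3 : (‖c‖ / (4*(D+1))) * D ≤ ‖c‖ / 4 := by
      rw [div_mul_eq_mul_div, div_le_div_iff₀ (by positivity) (by norm_num)]
      nlinarith
    linarith
  set δ : ℝ := ‖c‖ * ε / 8 with hδ
  have hδ0 : 0 < δ := by positivity
  have hint : a ∈ interior (numRange A) := by
    rw [mem_interior]
    refine ⟨Metric.ball a δ, ?_, Metric.isOpen_ball, Metric.mem_ball_self hδ0⟩
    intro w hw
    rw [Metric.mem_ball, Complex.dist_eq] at hw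
    by_cases hwa : w = a
    · rw [hwa]; exact hamem
    have hwa0 : 0 < ‖w - a‖ := by
      simpa [norm_pos_iff, sub_eq_zero] using hwa
    -- set-up for the intermediate value theorem
    set t₀ : ℝ := Real.arcsin ε with ht₀
    have hst₀ : Real.sin t₀ = ε := Real.sin_arcsin (by linarith) (by linarith)
    have ht₀pos : 0 < t₀ := Real.arcsin_pos.2 hε0
    have ht₀le : t₀ ≤ Real.pi/2 := Real.arcsin_le_pi_div_two ε
    have hcos₀ : (1:ℝ)/2 ≤ Real.cos t₀ := by
      rw [Real.cos_arcsin]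
      have h14 : (1:ℝ)/2 = Real.sqrt ((1/2)^2) := by
        rw [Real.sqrt_sq]; norm_num
      rw [h14]
      apply Real.sqrt_le_sqrt
      nlinarith
    set g : ℝ → ℝ := fun t =>
      ‖c‖ * (Real.sin t * Real.cos t)
        - ‖w - a - (Real.sin t:ℂ)^2 * (d - a)‖ with hg
    have hcont : Continuous g := by
      apply Continuous.sub
      · fun_prop
      · apply Continuous.comp continuous_norm
        fun_prop
    have hg0 : g 0 < 0 := by
      simp only [hg, Real.sin_zero, Real.cos_zero]
      push_cast
      simpa using hwa0
    have hgt₀ : 0 < g t₀ := by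
      simp only [hg, hst₀]
      have htri : ‖w - a - (ε:ℂ)^2 * (d - a)‖
          ≤ ‖w - a‖ + ε^2 * D := by
        calc ‖w - a - (ε:ℂ)^2 * (d - a)‖
            ≤ ‖w - a‖ + ‖(ε:ℂ)^2 * (d - a)‖ :=
              (norm_sub_le _ _)
          _ = ‖w - a‖ + ε^2 * D := by
              congr 1
              rw [norm_mul, norm_pow, Complex.norm_real, Real.norm_eq_abs, abs_of_nonneg hε0.le, ← hD]
      have hB : ε^2 * D ≤ ‖c‖ * ε / 4 := by
        have : ε^2 * D = ε * (ε * D) := by ring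
        rw [this]
        have := mul_le_mul_of_nonneg_left hεD hε0.le
        nlinarith
      have hA' : ‖w - a - (ε:ℂ)^2 * (d - a)‖
          < ‖c‖ * ε * 3 / 8 := by
        have hδ' : δ = ‖c‖ * ε / 8 := hδ
        linarith
      have hC : ‖c‖ * ε / 2 ≤ ‖c‖ * (ε * Real.cos t₀) := by
        have h' : (‖c‖ * ε) * (1/2) ≤ (‖c‖ * ε) * Real.cos t₀ :=
          mul_le_mul_of_nonneg_left hcos₀ (mul_pos hcc hε0).le
        calc ‖c‖ * ε / 2 = (‖c‖ * ε) * (1/2) := by ring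
          _ ≤ (‖c‖ * ε) * Real.cos t₀ := h'
          _ = ‖c‖ * (ε * Real.cos t₀) := by ring
      have hpos : 0 < ‖c‖ * ε := mul_pos hcc hε0
      linarith
    -- apply the IVT
    have h0mem : (0:ℝ) ∈ Set.Icc (g 0) (g t₀) := ⟨le_of_lt hg0, le_of_lt hgt₀⟩
    obtain ⟨t, htmem, hgt⟩ :=
      intermediate_value_Icc (le_of_lt ht₀pos) hcont.continuousOn h0mem
    have hsin : 0 ≤ Real.sin t := by
      apply Real.sin_nonneg_of_nonneg_of_le_pi htmem.1
      have hpi : Real.pi/2 ≤ Real.pi := by linarith [Real.pi_pos]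
      linarith [htmem.2]
    have hcost : (1:ℝ)/2 ≤ Real.cos t := by
      have : Real.cos t₀ ≤ Real.cos t := by
        apply Real.cos_le_cos_of_nonneg_of_le_pi htmem.1
        · linarith [htmem.2, Real.pi_pos]
        · exact htmem.2
      linarith
    set r : ℝ := Real.sin t * Real.cos t with hr
    have hr0 : 0 ≤ r := mul_nonneg hsin (by linarith)
    set v : ℂ := w - a - (Real.sin t:ℂ)^2 * (d - a) with hv
    have habsv : ‖v‖ = ‖c‖ * r := by
      have : g t = 0 := hgt
      simp only [hg] at this
      rw [← hv, ← hr] at this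
      linarith
    have hv0 : v ≠ 0 := by
      intro h0
      have hr00 : ‖c‖ * r = 0 := by rw [← habsv, h0, norm_zero]
      have : r = 0 := by
        rcases mul_eq_zero.1 hr00 with h | h
        · exact absurd h (ne_of_gt hcc)
        · exact h
      have hsin0 : Real.sin t = 0 := by
        rcases mul_eq_zero.1 this with h | h
        · exact h
        · linarith
      apply hwa
      have : v = w - a := by rw [hv, hsin0]; push_cast; ring
      rw [this] at h0
      have := sub_eq_zero.1 h0
      exact this
    have hrpos : 0 < r := by
      rcases lt_or_eq_of_le hr0 with h | h
      · exact h
      · exfalso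
        apply hv0
        have : ‖v‖ = 0 := by rw [habsv, ← h, mul_zero]
        simpa using this
    set z : ℂ := v / ((r:ℂ) * c) with hz
    have hrc0 : ((r:ℂ) * c) ≠ 0 := by
      apply mul_ne_zero
      · exact_mod_cast ne_of_gt hrpos
      · exact hcne
    have habsz : ‖z‖ = 1 := by
      rw [hz, norm_div, habsv, norm_mul, Complex.norm_real, Real.norm_eq_abs, abs_of_nonneg hr0,
        mul_comm (‖c‖) r]
      exact div_self (ne_of_gt (mul_pos hrpos hcc))
    have hez : Complex.exp ((Complex.arg z : ℂ) * Complex.I) = z := by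
      conv_rhs => rw [← Complex.norm_mul_exp_arg_mul_I z]
      rw [habsz]
      simp
    have hkey := hmem t (-Complex.arg z)
    have hexp : Complex.exp (-(((-Complex.arg z : ℝ):ℂ) * Complex.I)) = z := by
      rw [Complex.ofReal_neg, neg_mul, neg_neg, hez]
    rw [hexp] at hkey
    have hfin : a + z * ((Real.sin t : ℂ) * (Real.cos t : ℂ)) * c
        + (Real.sin t : ℂ)^2 * (d - a) = w := by
      have hrc : ((r:ℂ)) = (Real.sin t : ℂ) * (Real.cos t : ℂ) := by
        rw [hr]; push_cast; ring
      have hzv : z * ((r:ℂ) * c) = v := div_mul_cancel₀ v hrc0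
      calc a + z * ((Real.sin t : ℂ) * (Real.cos t : ℂ)) * c + (Real.sin t : ℂ)^2 * (d - a)
          = a + z * ((r:ℂ) * c) + (Real.sin t : ℂ)^2 * (d - a) := by rw [hrc]; ring
        _ = a + v + (Real.sin t : ℂ)^2 * (d - a) := by rw [hzv]
        _ = w := by rw [hv]; ring
    rw [hfin] at hkey
    exact hkey
  exact h1.2 hint
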